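/- Let G be a digraphic bidirected graph, let α ∈ {+, −}, and let H be a circular component of G. Then the family { S ∈ P(G; α) : S ⊆ V(H) } of equivalence classes of ∼_α contained in V(H) coincides with { V(H) }; that is, any two vertices of the same circular component of a digraphic bidirected graph are ∼_α-equivalent. -/

import Mathlib

/-- A bidirected graph on vertex type `V` with edge type `E`: each edge `e` has two
designated ends, `fst e` and `snd e`, and each end carries a sign
(`true` = `+`, `false` = `-`). -/
structure BidirGraph (V : Type*) (E : Type*) where
  fst : E → V
  snd : E → V
  sgnFst : E → Bool
  sgnSnd : E → Bool

namespace BidirGraph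

variable {V E : Type*} (G : BidirGraph V E)

/-- A step is an edge together with a direction of traversal
(`true` = from `fst` to `snd`). -/
def stepTail (s : E × Bool) : V := if s.2 then G.fst s.1 else G.snd s.1

def stepHead (s : E × Bool) : V := if s.2 then G.snd s.1 else G.fst s.1

/-- The sign of the start vertex of a step over its edge. -/
def stepTailSign (s : E × Bool) : Bool := if s.2 then G.sgnFst s.1 else G.sgnSnd s.1

/-- The sign of the end vertex of a step over its edge. -/
def stepHeadSign (s : E × Bool) : Bool := if s.2 then G.sgnSnd s.1 else G.sgnFst s.1

/-- `L` is a walk from `u` to `v`. -/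
def IsWalk (u v : V) (L : List (E × Bool)) : Prop :=
  List.Chain' (fun s t => G.stepHead s = G.stepTail t) L ∧
  (L = [] → u = v) ∧
  (∀ s, L.head? = some s → G.stepTail s = u) ∧
  (∀ s, L.getLast? = some s → G.stepHead s = v)

/-- A ditrail: a walk with pairwise distinct edges in which, at every internal vertex,
the signs over the preceding and the succeeding edges are distinct. -/
def IsDitrail (u v : V) (L : List (E × Bool)) : Prop :=
  G.IsWalk u v L ∧ (L.map Prod.fst).Nodup ∧
  List.Chain' (fun s t => G.stepHeadSign s ≠ G.stepTailSign t) L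

/-- An `(α, β)`-ditrail from `u` to `v`: a ditrail with at least one edge that starts
with sign `α` and ends with sign `β`; a trivial (edgeless) ditrail counts as an
`(α, β)`-ditrail whenever `α ≠ β`. -/
def IsABDitrail (α β : Bool) (u v : V) (L : List (E × Bool)) : Prop :=
  G.IsDitrail u v L ∧
  ((L = [] ∧ α ≠ β) ∨
   (L ≠ [] ∧ (∀ s, L.head? = some s → G.stepTailSign s = α) ∧
    (∀ s, L.getLast? = some s → G.stepHeadSign s = β)))

/-- An edge is circular if some cyclic ditrail (a closed `(α, -α)`-ditrail) contains it. -/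
def IsCircular (e : E) : Prop :=
  ∃ (v : V) (α : Bool) (L : List (E × Bool)),
    G.IsABDitrail α (!α) v v L ∧ ∃ d : Bool, (e, d) ∈ L

/-- Two vertices are circularly connected if some path (a walk without repeated
vertices) between them uses only circular edges. -/
def CircConn (u v : V) : Prop :=
  ∃ L : List (E × Bool), G.IsWalk u v L ∧ (u :: L.map G.stepHead).Nodup ∧
    ∀ p ∈ L, G.IsCircular p.1

/-- A bidirected graph is circularly connected if every two vertices are
circularly connected. -/
def CircularlyConnected : Prop := ∀ u v : V, G.CircConn u v

/-- The vertex set of a circular component: an equivalence class of circular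
connectivity. -/
def IsCircComponent (C : Set V) : Prop := ∃ v : V, C = {u | G.CircConn u v}

/-- The relation `∼_α`: `u ∼_α v` iff `u = v`, or `u` and `v` are circularly connected
and there is no `(α, α)`-ditrail between them. -/
def SimRel (α : Bool) (u v : V) : Prop :=
  u = v ∨ (G.CircConn u v ∧
    ¬ ∃ L : List (E × Bool), G.IsABDitrail α α u v L ∨ G.IsABDitrail α α v u L)

/-- A bidirected graph is digraphic if for every edge the two ends carry distinct
signs, i.e., exactly one end has sign `+` and the other has sign `-`. -/
def IsDigraphic : Prop := ∀ e : E, G.sgnFst e ≠ G.sgnSnd e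

/-- A dipath: a ditrail in which no vertex occurs more than once. -/
def IsDipath (u v : V) (L : List (E × Bool)) : Prop :=
  G.IsDitrail u v L ∧ (u :: L.map G.stepHead).Nodup

/-- Two vertices of a digraphic bidirected graph are strongly connected if there are
`(-, +)`-ditrails from `u` to `v` and from `v` to `u`. -/
def StronglyConn (u v : V) : Prop :=
  (∃ L, G.IsABDitrail false true u v L) ∧ (∃ L, G.IsABDitrail false true v u L)

end BidirGraph


namespace BidirGraph

variable {V E : Type*} (G : BidirGraph V E)

/-- An inductive characterization of walks. -/
inductive Steps (G : BidirGraph V E) : V → V → List (E × Bool) → Prop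
  | nil (u : V) : Steps G u u []
  | cons {u w v : V} {s : E × Bool} {L : List (E × Bool)}
      (h1 : G.stepTail s = u) (h2 : G.stepHead s = w)
      (h : Steps G w v L) : Steps G u v (s :: L)

theorem Steps.isWalk {u v : V} {L : List (E × Bool)} (h : G.Steps u v L) :
    G.IsWalk u v L := by
  induction h with
  | nil u => exact ⟨List.isChain_nil, fun _ => rfl, by simp, by simp⟩
  | @cons u w v s L h1 h2 h ih =>
    obtain ⟨c, he, hh, hl⟩ := ih
    refine ⟨List.isChain_cons.2 ⟨?_, c⟩, by simp, by simpa using h1, ?_⟩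
    · intro t ht
      rw [h2, ← hh t ht]
    · intro t ht
      cases L with
      | nil => simp at ht; subst ht; rw [h2, he rfl]
      | cons a L' => rw [List.getLast?_cons_cons] at ht; exact hl t ht

theorem IsWalk.steps {u v : V} {L : List (E × Bool)} (h : G.IsWalk u v L) :
    G.Steps u v L := by
  induction L generalizing u with
  | nil => obtain ⟨-, he, -, -⟩ := h; rw [he rfl]; exact Steps.nil v
  | cons s L ih =>
    obtain ⟨c, he, hh, hl⟩ := h
    simp only [List.Chain', List.isChain_cons] at c
    refine Steps.cons (hh s rfl) rfl (ih ⟨c.2, ?_, ?_, ?_⟩)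
    · rintro rfl; exact hl s rfl
    · intro t ht; exact (c.1 t ht).symm
    · intro t ht
      apply hl
      cases L with
      | nil => simp at ht
      | cons a L' => rw [List.getLast?_cons_cons]; exact ht

theorem Steps.append {u w v : V} {L1 L2 : List (E × Bool)}
    (h1 : G.Steps u w L1) (h2 : G.Steps w v L2) : G.Steps u v (L1 ++ L2) := by
  induction h1 with
  | nil => simpa using h2
  | cons a b h ih => exact Steps.cons a b (ih h2)

/-- Reversing a step. -/
def flipStep (s : E × Bool) : E × Bool := (s.1, !s.2)

theorem stepTail_flip (s : E × Bool) : G.stepTail (flipStep s) = G.stepHead s := by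
  cases s with
  | mk e b => cases b <;> simp [flipStep, stepTail, stepHead]

theorem stepHead_flip (s : E × Bool) : G.stepHead (flipStep s) = G.stepTail s := by
  cases s with
  | mk e b => cases b <;> simp [flipStep, stepTail, stepHead]

theorem Steps.reverse {u v : V} {L : List (E × Bool)} (h : G.Steps u v L) :
    G.Steps v u ((L.map flipStep).reverse) := by
  induction h with
  | nil => exact Steps.nil _
  | @cons u w v s L h1 h2 h ih =>
    simp only [List.map_cons, List.reverse_cons]
    exact Steps.append G ih (Steps.cons (by rw [stepTail_flip, h2])
      (by rw [stepHead_flip, h1]) (Steps.nil u))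

theorem Steps.suffix_of_mem {w v u : V} {L : List (E × Bool)} (h : G.Steps w v L)
    (hn : (w :: L.map G.stepHead).Nodup) (hu : u ∈ w :: L.map G.stepHead) :
    ∃ L', G.Steps u v L' ∧ (∀ p ∈ L', p ∈ L) ∧ (u :: L'.map G.stepHead).Nodup := by
  induction h with
  | nil w => simp at hu; subst hu; exact ⟨[], Steps.nil u, by simp, by simp⟩
  | @cons w x v s L h1 h2 h ih =>
    rcases List.mem_cons.1 hu with rfl | hu'
    · exact ⟨s :: L, Steps.cons h1 h2 h, fun p hp => hp, hn⟩
    · simp only [List.map_cons, h2] at hu' hn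
      obtain ⟨L', a, b, c⟩ := ih (List.nodup_cons.1 hn).2 hu'
      exact ⟨L', a, fun p hp => List.mem_cons_of_mem s (b p hp), c⟩

/-- Path extraction: every walk contains a path with the same endpoints. -/
theorem Steps.bypass {u v : V} {L : List (E × Bool)} (h : G.Steps u v L) :
    ∃ L', G.Steps u v L' ∧ (∀ p ∈ L', p ∈ L) ∧ (u :: L'.map G.stepHead).Nodup := by
  induction h with
  | nil u => exact ⟨[], Steps.nil u, by simp, by simp⟩
  | @cons u w v s L h1 h2 h ih =>
    obtain ⟨L', a, b, c⟩ := ih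
    by_cases hu : u ∈ w :: L'.map G.stepHead
    · obtain ⟨L'', a', b', c'⟩ := a.suffix_of_mem G c hu
      exact ⟨L'', a', fun p hp => List.mem_cons_of_mem s (b p (b' p hp)), c'⟩
    · refine ⟨s :: L', Steps.cons h1 h2 a, ?_, ?_⟩
      · intro p hp
        rcases List.mem_cons.1 hp with rfl | hp'
        · exact List.mem_cons_self
        · exact List.mem_cons_of_mem s (b p hp')
      · simp only [List.map_cons, h2]
        exact List.nodup_cons.2 ⟨hu, c⟩

theorem stepHeadSign_eq_not (hG : G.IsDigraphic) (s : E × Bool) :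
    G.stepHeadSign s = !G.stepTailSign s := by
  cases s with
  | mk e b =>
    have := hG e
    cases b <;> simp only [BidirGraph.stepHeadSign, BidirGraph.stepTailSign] <;>
      cases hb : G.sgnFst e <;> cases hs : G.sgnSnd e <;> simp_all

/-- In a digraphic graph all steps of a ditrail carry the same tail sign. -/
theorem tailSign_const (hG : G.IsDigraphic) :
    ∀ {L : List (E × Bool)} {s t : E × Bool},
      List.Chain' (fun s t => G.stepHeadSign s ≠ G.stepTailSign t) L →
      L.head? = some s → L.getLast? = some t →
      G.stepTailSign s = G.stepTailSign t := by
  intro L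
  induction L with
  | nil => intro s t _ h; simp at h
  | cons a L ih =>
    intro s t hc hh hl
    simp only [List.head?_cons, Option.some.injEq] at hh
    obtain rfl : a = s := hh
    cases L with
    | nil => simp at hl; subst hl; rfl
    | cons b L' =>
      rw [List.getLast?_cons_cons] at hl
      simp only [List.Chain', List.isChain_cons_cons] at hc
      have h1 : G.stepTailSign a = G.stepTailSign b := by
        have := hc.1
        rw [stepHeadSign_eq_not G hG] at this
        cases hx : G.stepTailSign a <;> cases hy : G.stepTailSign b <;> simp_all
      rw [h1]
      exact ih hc.2 rfl hl

/-- In a digraphic graph there is no `(α, α)`-ditrail. -/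
theorem no_aa_ditrail (hG : G.IsDigraphic) {α : Bool} {u v : V} {L : List (E × Bool)}
    (h : G.IsABDitrail α α u v L) : False := by
  obtain ⟨⟨hw, hnd, hc⟩, hcase⟩ := h
  rcases hcase with ⟨-, hne⟩ | ⟨hne, hh, hl⟩
  · exact hne rfl
  · cases L with
    | nil => exact hne rfl
    | cons a L' =>
      obtain ⟨t, ht⟩ : ∃ t, (a :: L').getLast? = some t :=
        ⟨(a :: L').getLast (by simp), List.getLast?_eq_getLast (by simp)⟩
      have hts : G.stepTailSign a = G.stepTailSign t := tailSign_const G hG hc rfl ht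
      have h1 : G.stepTailSign a = α := hh a rfl
      have h2 : G.stepHeadSign t = α := hl t ht
      rw [stepHeadSign_eq_not G hG, ← hts, h1] at h2
      simp at h2

theorem circConn_refl (u : V) : G.CircConn u u :=
  ⟨[], (Steps.nil u).isWalk G, by simp, by simp⟩

/-- Circular connectivity in terms of `Steps` walks (no injectivity needed). -/
theorem circConn_iff_reach {u v : V} :
    G.CircConn u v ↔ ∃ L, G.Steps u v L ∧ ∀ p ∈ L, G.IsCircular p.1 := by
  constructor
  · rintro ⟨L, hw, -, hcirc⟩
    exact ⟨L, hw.steps G, hcirc⟩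
  · rintro ⟨L, hs, hcirc⟩
    obtain ⟨L', a, b, c⟩ := hs.bypass G
    exact ⟨L', a.isWalk G, c, fun p hp => hcirc p (b p hp)⟩

theorem circConn_symm {u v : V} (h : G.CircConn u v) : G.CircConn v u := by
  rw [circConn_iff_reach] at h ⊢
  obtain ⟨L, hs, hc⟩ := h
  refine ⟨(L.map flipStep).reverse, hs.reverse G, ?_⟩
  intro p hp
  rw [List.mem_reverse, List.mem_map] at hp
  obtain ⟨q, hq, rfl⟩ := hp
  exact hc q hq

theorem circConn_trans {u v w : V} (h1 : G.CircConn u v) (h2 : G.CircConn v w) :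
    G.CircConn u w := by
  rw [circConn_iff_reach] at h1 h2 ⊢
  obtain ⟨L1, a1, b1⟩ := h1
  obtain ⟨L2, a2, b2⟩ := h2
  refine ⟨L1 ++ L2, a1.append G a2, ?_⟩
  intro p hp
  rcases List.mem_append.1 hp with h | h
  exacts [b1 p h, b2 p h]

/-- In a digraphic graph, `∼_α` is just circular connectivity. -/
theorem simRel_iff_circConn (hG : G.IsDigraphic) {α : Bool} {u v : V} :
    G.SimRel α u v ↔ G.CircConn u v := by
  constructor
  · rintro (rfl | ⟨h, -⟩)
    · exact circConn_refl G u
    · exact h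
  · intro h
    exact Or.inr ⟨h, by rintro ⟨L, hL | hL⟩ <;> exact no_aa_ditrail G hG hL⟩

end BidirGraph

/-- If `G` is digraphic and `C` is the vertex set of a circular
component, then the family of `∼_α`-classes contained in `C` coincides with `{C}`;
that is, any two vertices of the same circular component are `∼_α`-equivalent. -/
theorem digraphic_simRel_classes_trivial {V E : Type*} (G : BidirGraph V E)
    (hG : G.IsDigraphic) (α : Bool) (C : Set V) (hC : G.IsCircComponent C) :
    {S : Set V | (∃ v : V, S = {u | G.SimRel α u v}) ∧ S ⊆ C} = {C} ∧
    ∀ u ∈ C, ∀ v ∈ C, G.SimRel α u v := by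
  obtain ⟨v₀, rfl⟩ := hC
  have key : ∀ u ∈ {u | G.CircConn u v₀}, ∀ v ∈ {u | G.CircConn u v₀}, G.SimRel α u v := by
    intro u hu v hv
    rw [G.simRel_iff_circConn hG]
    exact G.circConn_trans hu (G.circConn_symm hv)
  refine ⟨?_, key⟩
  ext S
  simp only [Set.mem_setOf_eq, Set.mem_singleton_iff]
  constructor
  · rintro ⟨⟨v, rfl⟩, hsub⟩
    have hv : G.CircConn v v₀ := hsub (show G.SimRel α v v from Or.inl rfl)
    ext u
    simp only [Set.mem_setOf_eq, G.simRel_iff_circConn hG]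
    exact ⟨fun h => G.circConn_trans h hv, fun h => G.circConn_trans h (G.circConn_symm hv)⟩
  · rintro rfl
    refine ⟨⟨v₀, ?_⟩, subset_rfl⟩
    ext u
    simp only [Set.mem_setOf_eq, G.simRel_iff_circConn hG]
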